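/- In the Partition-reduction instance, every AEF allocation (A_1, A_2) satisfies |A_1| = |A_2| = k, and consequently v(A_1) = v(A_2). -/

import Mathlib

open Finset

/-- Average value of a bundle: total value divided by cardinality; `0` for the empty bundle. -/
noncomputable def avgVal {G : Type*} (v : G → ℝ) (S : Finset G) : ℝ :=
  (∑ g ∈ S, v g) / (S.card : ℝ)

/-- The identical valuation of the Partition-reduction instance over the `2k` items,
encoded as pairs `(j, b) : Fin k × Bool`: the item `gˢ_{j+1}` is `(j, false)` with value
`(T²k²)^(j+1)`, and the item `gˡ_{j+1}` is `(j, true)` with value `(T²k²)^(j+1) + x_{j+1}`. -/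
noncomputable def pv (k T : ℕ) (x : Fin k → ℕ) (p : Fin k × Bool) : ℝ :=
  ((T ^ 2 * k ^ 2 : ℕ) : ℝ) ^ ((p.1 : ℕ) + 1) + (if p.2 then (x p.1 : ℝ) else 0)

private lemma digit_cancel (M A B u v : ℕ) (hM : 0 < M) (hu : u < M) (hv : v < M)
    (h : A * M + u = B * M + v) : A = B ∧ u = v := by
  have huv : u = v := by
    have h1 : (A * M + u) % M = (B * M + v) % M := by rw [h]
    rwa [add_comm (A * M) u, add_comm (B * M) v, Nat.add_mul_mod_self_right,
      Nat.add_mul_mod_self_right, Nat.mod_eq_of_lt hu, Nat.mod_eq_of_lt hv] at h1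
  subst huv
  have h2 : A * M = B * M := by omega
  exact ⟨Nat.eq_of_mul_eq_mul_right hM h2, rfl⟩

private lemma digits_unique (M : ℕ) (hM : 0 < M) :
    ∀ (n : ℕ) (u v : ℕ → ℕ), (∀ j, j < n → u j < M) → (∀ j, j < n → v j < M) →
      (∑ j ∈ Finset.range n, u j * M ^ j) = (∑ j ∈ Finset.range n, v j * M ^ j) →
      ∀ j, j < n → u j = v j
  | 0 => by intro u v _ _ _ j hj; omega
  | n + 1 => by
    intro u v hu hv heq j hj
    rw [Finset.sum_range_succ', Finset.sum_range_succ'] at heq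
    have hrw : ∀ (w : ℕ → ℕ),
        (∑ i ∈ Finset.range n, w (i + 1) * M ^ (i + 1))
          = (∑ i ∈ Finset.range n, w (i + 1) * M ^ i) * M := by
      intro w
      rw [Finset.sum_mul]
      exact Finset.sum_congr rfl fun i _ => by ring
    rw [hrw u, hrw v] at heq
    simp only [pow_zero, mul_one] at heq
    obtain ⟨hAB, h0⟩ := digit_cancel M _ _ _ _ hM (hu 0 (Nat.succ_pos n)) (hv 0 (Nat.succ_pos n)) heq
    match j, hj with
    | 0, _ => exact h0
    | (i + 1), hj =>
      exact digits_unique M hM n (fun i => u (i + 1)) (fun i => v (i + 1))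
        (fun i hi => hu _ (by omega)) (fun i hi => hv _ (by omega)) hAB i (by omega)

theorem partition_reduction_equal_cards (k T : ℕ) (hk : 4 ≤ k) (hT : 4 ≤ T)
    (x : Fin k → ℕ) (hsum : ∑ j, x j = 2 * T)
    (A1 A2 : Finset (Fin k × Bool))
    (hdisj : Disjoint A1 A2) (hcover : A1 ∪ A2 = Finset.univ)
    (hAEF : avgVal (pv k T x) A1 = avgVal (pv k T x) A2) :
    A1.card = k ∧ A2.card = k ∧ ∑ g ∈ A1, pv k T x g = ∑ g ∈ A2, pv k T x g := by
  set M : ℕ := T ^ 2 * k ^ 2 with hMdef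
  have hM : 0 < M := by positivity
  set w : Fin k × Bool → ℕ := fun p => M ^ ((p.1 : ℕ) + 1) + (if p.2 then x p.1 else 0) with hwdef
  have hpv : ∀ p, pv k T x p = (w p : ℝ) := by
    intro p
    simp only [pv, hwdef]
    cases hb : p.2 <;> simp [hb, hMdef] <;> push_cast <;> ring
  have hsum1 : ∑ g ∈ A1, pv k T x g = ((∑ g ∈ A1, w g : ℕ) : ℝ) := by
    push_cast; exact Finset.sum_congr rfl fun p _ => hpv p
  have hsum2 : ∑ g ∈ A2, pv k T x g = ((∑ g ∈ A2, w g : ℕ) : ℝ) := by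
    push_cast; exact Finset.sum_congr rfl fun p _ => hpv p
  have hwpos : ∀ p, 0 < w p := by
    intro p
    have : 0 < M ^ ((p.1 : ℕ) + 1) := Nat.pow_pos hM
    simp only [hwdef]; omega
  -- nonemptiness
  have havgpos : ∀ S : Finset (Fin k × Bool), S.Nonempty →
      0 < avgVal (pv k T x) S := by
    intro S hS
    unfold avgVal
    apply div_pos
    · have : ∑ g ∈ S, pv k T x g = ((∑ g ∈ S, w g : ℕ) : ℝ) := by
        push_cast; exact Finset.sum_congr rfl fun p _ => hpv p
      rw [this]
      exact_mod_cast Finset.sum_pos (fun p _ => hwpos p) hS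
    · exact_mod_cast Finset.card_pos.mpr hS
  have hA1 : A1.Nonempty := by
    by_contra h
    rw [Finset.not_nonempty_iff_eq_empty] at h
    subst h
    simp only [Finset.empty_union] at hcover
    have hne : A2.Nonempty := by
      rw [hcover]; exact ⟨(⟨0, by omega⟩, true), Finset.mem_univ _⟩
    have := havgpos A2 hne
    rw [← hAEF] at this
    simp [avgVal] at this
  have hA2 : A2.Nonempty := by
    by_contra h
    rw [Finset.not_nonempty_iff_eq_empty] at h
    subst h
    simp only [Finset.union_empty] at hcover
    have hne : A1.Nonempty := by
      rw [hcover]; exact ⟨(⟨0, by omega⟩, true), Finset.mem_univ _⟩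
    have := havgpos A1 hne
    rw [hAEF] at this
    simp [avgVal] at this
  set N1 : ℕ := ∑ g ∈ A1, w g with hN1def
  set N2 : ℕ := ∑ g ∈ A2, w g with hN2def
  have ha : 0 < A1.card := Finset.card_pos.mpr hA1
  have hb : 0 < A2.card := Finset.card_pos.mpr hA2
  have hab : A1.card + A2.card = 2 * k := by
    rw [← Finset.card_union_of_disjoint hdisj, hcover, Finset.card_univ]
    simp [Fintype.card_prod]
    ring
  -- cross multiplication
  have hnat : N1 * A2.card = N2 * A1.card := by
    have ha' : (A1.card : ℝ) ≠ 0 := by exact_mod_cast ha.ne'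
    have hb' : (A2.card : ℝ) ≠ 0 := by exact_mod_cast hb.ne'
    rw [avgVal, avgVal, hsum1, hsum2, div_eq_div_iff ha' hb'] at hAEF
    exact_mod_cast hAEF
  have h2k : 2 * k * N1 = A1.card * (N1 + N2) := by
    rw [← hab, add_mul, mul_add]
    congr 1
    rw [mul_comm A2.card N1, hnat, mul_comm]
  -- total value
  set SS : ℕ := ∑ j ∈ Finset.range k, M ^ (j + 1) with hSSdef
  have hV : N1 + N2 = 2 * SS + 2 * T := by
    rw [hN1def, hN2def, ← Finset.sum_union hdisj, hcover]
    rw [Fintype.sum_prod_type]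
    have hbool : ∀ j : Fin k, ∑ b : Bool, w (j, b) = 2 * M ^ ((j : ℕ) + 1) + x j := by
      intro j
      simp only [Fintype.sum_bool, hwdef]
      simp; ring
    rw [Finset.sum_congr rfl fun j _ => hbool j, Finset.sum_add_distrib, ← Finset.mul_sum,
      Fin.sum_univ_eq_sum_range (fun j => M ^ (j + 1)) k, hsum]
  -- fiber decomposition of N1
  set cc : ℕ → ℕ := fun j => (A1.filter fun p => (p.1 : ℕ) = j).card with hccdef
  have hmaps : ∀ p ∈ A1, (p.1 : ℕ) ∈ Finset.range k := fun p _ => Finset.mem_range.mpr p.1.isLt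
  have hcardA1 : A1.card = ∑ j ∈ Finset.range k, cc j :=
    Finset.card_eq_sum_card_fiberwise hmaps
  set X : ℕ := ∑ p ∈ A1, (if p.2 then x p.1 else 0) with hXdef
  have hN1eq : N1 = (∑ j ∈ Finset.range k, cc j * M ^ (j + 1)) + X := by
    rw [hN1def, hwdef]
    rw [Finset.sum_add_distrib]
    congr 1
    rw [← Finset.sum_fiberwise_of_maps_to hmaps (fun p => M ^ ((p.1 : ℕ) + 1))]
    refine Finset.sum_congr rfl fun j hj => ?_
    have : ∀ p ∈ A1.filter fun p => (p.1 : ℕ) = j,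
        M ^ ((p.1 : ℕ) + 1) = M ^ (j + 1) := by
      intro p hp
      rw [(Finset.mem_filter.mp hp).2]
    rw [Finset.sum_congr rfl this, Finset.sum_const, smul_eq_mul]
  have hX : X ≤ 2 * T := by
    have h1 : X ≤ ∑ p : Fin k × Bool, (if p.2 then x p.1 else 0) :=
      Finset.sum_le_sum_of_subset (Finset.subset_univ A1)
    have h2 : ∑ p : Fin k × Bool, (if p.2 then x p.1 else 0) = 2 * T := by
      rw [Fintype.sum_prod_type]
      simp [Fintype.sum_bool, hsum]
    omega
  -- k * N1 = a * (SS + T)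
  have hkey : k * N1 = A1.card * (SS + T) := by
    have h2 : 2 * (k * N1) = 2 * (A1.card * (SS + T)) := by
      calc 2 * (k * N1) = 2 * k * N1 := by ring
        _ = A1.card * (N1 + N2) := h2k
        _ = A1.card * (2 * SS + 2 * T) := by rw [hV]
        _ = 2 * (A1.card * (SS + T)) := by ring
    exact Nat.eq_of_mul_eq_mul_left (by norm_num) h2
  -- factor M
  set P' : ℕ := ∑ j ∈ Finset.range k, cc j * M ^ j with hP'def
  set S' : ℕ := ∑ j ∈ Finset.range k, M ^ j with hS'def
  have hPfac : ∑ j ∈ Finset.range k, cc j * M ^ (j + 1) = P' * M := by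
    rw [hP'def, Finset.sum_mul]
    exact Finset.sum_congr rfl fun j _ => by ring
  have hSfac : SS = S' * M := by
    rw [hS'def, hSSdef, Finset.sum_mul]
    exact Finset.sum_congr rfl fun j _ => by ring
  have hmain : (k * P') * M + k * X = (A1.card * S') * M + A1.card * T := by
    have := hkey
    rw [hN1eq, hPfac, hSfac] at this
    calc (k * P') * M + k * X = k * (P' * M + X) := by ring
      _ = A1.card * (S' * M + T) := this
      _ = (A1.card * S') * M + A1.card * T := by ring
  have hale : A1.card ≤ 2 * k := by omega
  have hccle : ∀ j, cc j ≤ A1.card := fun j => Finset.card_filter_le _ _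
  have h4T : 4 * T ≤ T ^ 2 := by
    calc 4 * T ≤ T * T := Nat.mul_le_mul_right T hT
      _ = T ^ 2 := (pow_two T).symm
  have h4k : 4 * k ≤ k ^ 2 := by
    calc 4 * k ≤ k * k := Nat.mul_le_mul_right k hk
      _ = k ^ 2 := (pow_two k).symm
  have hT16 : 16 ≤ T ^ 2 := by
    calc (16 : ℕ) = 4 * 4 := by norm_num
      _ ≤ T * T := Nat.mul_le_mul hT hT
      _ = T ^ 2 := (pow_two T).symm
  have hM16 : 16 * (k * T) ≤ M := by
    rw [hMdef]
    calc 16 * (k * T) = (4 * T) * (4 * k) := by ring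
      _ ≤ T ^ 2 * k ^ 2 := Nat.mul_le_mul h4T h4k
  have hkT : 0 < k * T := Nat.mul_pos (by omega) (by omega)
  have hM16k : 16 * (k * k) ≤ M := by
    rw [hMdef]
    calc 16 * (k * k) = 16 * k ^ 2 := by ring
      _ ≤ T ^ 2 * k ^ 2 := Nat.mul_le_mul_right _ hT16
  have hkk : 0 < k * k := Nat.mul_pos (by omega) (by omega)
  have h2kT : 2 * (k * T) < M := by
    have : 2 * (k * T) < 16 * (k * T) := by omega
    exact lt_of_lt_of_le this hM16
  have hXlt : k * X < M := by
    have h1 : k * X ≤ 2 * (k * T) := by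
      calc k * X ≤ k * (2 * T) := Nat.mul_le_mul_left k hX
        _ = 2 * (k * T) := by ring
    exact lt_of_le_of_lt h1 h2kT
  have haTlt : A1.card * T < M := by
    have h1 : A1.card * T ≤ 2 * (k * T) := by
      calc A1.card * T ≤ (2 * k) * T := Nat.mul_le_mul_right T hale
        _ = 2 * (k * T) := by ring
    exact lt_of_le_of_lt h1 h2kT
  obtain ⟨hPS, hXT⟩ := digit_cancel M (k * P') (A1.card * S') (k * X) (A1.card * T) hM hXlt haTlt hmain
  -- digits
  have hdigeq : (∑ j ∈ Finset.range k, (k * cc j) * M ^ j)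
      = ∑ j ∈ Finset.range k, A1.card * M ^ j := by
    calc (∑ j ∈ Finset.range k, (k * cc j) * M ^ j) = k * P' := by
          rw [hP'def, Finset.mul_sum]; exact Finset.sum_congr rfl fun j _ => by ring
      _ = A1.card * S' := hPS
      _ = ∑ j ∈ Finset.range k, A1.card * M ^ j := by
          rw [hS'def, Finset.mul_sum]
  have hdig : ∀ j, j < k → k * cc j = A1.card := by
    apply digits_unique M hM k (fun j => k * cc j) (fun _ => A1.card)
    · intro j hj
      have h1 : k * cc j ≤ 2 * (k * k) := by
        calc k * cc j ≤ k * (2 * k) := Nat.mul_le_mul_left k (le_trans (hccle j) hale)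
          _ = 2 * (k * k) := by ring
      have h2 : 2 * (k * k) < M := by
        have : 2 * (k * k) < 16 * (k * k) := by omega
        exact lt_of_lt_of_le this hM16k
      exact lt_of_le_of_lt h1 h2
    · intro j hj
      have h1 : A1.card ≤ 2 * (k * k) := by
        have : k ≤ k * k := Nat.le_mul_of_pos_left k (by omega)
        omega
      have h2 : 2 * (k * k) < M := by
        have : 2 * (k * k) < 16 * (k * k) := by omega
        exact lt_of_lt_of_le this hM16k
      exact lt_of_le_of_lt h1 h2
    · exact hdigeq
  have hc0 := hdig 0 (by omega)
  have hcases : cc 0 = 0 ∨ cc 0 = 1 ∨ 2 ≤ cc 0 := by omega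
  have hA1k : A1.card = k := by
    rcases hcases with h | h | h
    · rw [h, mul_zero] at hc0; omega
    · rw [h, mul_one] at hc0; omega
    · exfalso
      have : k * 2 ≤ k * cc 0 := Nat.mul_le_mul_left k h
      omega
  have hA2k : A2.card = k := by omega
  refine ⟨hA1k, hA2k, ?_⟩
  have hNeq : N1 = N2 := by
    have : N1 * k = N2 * k := by
      calc N1 * k = N1 * A2.card := by rw [hA2k]
        _ = N2 * A1.card := hnat
        _ = N2 * k := by rw [hA1k]
    exact Nat.eq_of_mul_eq_mul_right (by omega) this
  rw [hsum1, hsum2, hNeq]
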